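/- Let G be a subgroup of PGL_2(F_q) generated by two commuting elements g_1, g_2 of orders d_1 and d_2 respectively, such that g_1^{d_1/d} = g_2^{d_2/d} where d = gcd(d_1, d_2). Then G is cyclic. -/
import Mathlib


variable {F : Type*} [Field F] [Fintype F]

/-- The projective general linear group `PGL₂(F)`, as the quotient of `GL₂(F)` by
its center (the scalar matrices). -/
abbrev PGL2 (F : Type*) [Field F] : Type _ :=
  GL (Fin 2) F ⧸ Subgroup.center (GL (Fin 2) F)

theorem zpowers_isCyclic {G : Type*} [Group G] (t : G) :
    IsCyclic (Subgroup.zpowers t) := by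
  refine ⟨⟨⟨t, Subgroup.mem_zpowers t⟩, fun x => ?_⟩⟩
  obtain ⟨k, hk⟩ := x.2
  exact ⟨k, Subtype.ext (by simpa using hk)⟩

theorem closure_commuting_cyclic (g₁ g₂ : PGL2 F) (hcomm : Commute g₁ g₂)
    (hpow : g₁ ^ (orderOf g₁ / Nat.gcd (orderOf g₁) (orderOf g₂)) =
      g₂ ^ (orderOf g₂ / Nat.gcd (orderOf g₁) (orderOf g₂))) :
    IsCyclic (Subgroup.closure ({g₁, g₂} : Set (PGL2 F))) := by
  have hfin : Finite (PGL2 F) := Quotient.finite _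
  set d₁ := orderOf g₁ with hd₁def
  set d₂ := orderOf g₂ with hd₂def
  set d := Nat.gcd d₁ d₂ with hddef
  have hd₁ : 0 < d₁ := orderOf_pos g₁
  have hd₂ : 0 < d₂ := orderOf_pos g₂
  set a := d₁ / d with hadef
  set b := d₂ / d with hbdef
  have hcop : Nat.Coprime a b := Nat.coprime_div_gcd_div_gcd (Nat.gcd_pos_of_pos_left _ hd₁)
  -- Bezout: 1 = b * x + a * y over ℤ
  have hbez : (1 : ℤ) = b * Nat.gcdA b a + a * Nat.gcdB b a := by
    have := Nat.gcd_eq_gcd_ab b a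
    rwa [Nat.Coprime.gcd_eq_one hcop.symm, Nat.cast_one] at this
  set x := Nat.gcdA b a
  set y := Nat.gcdB b a
  set t := g₁ ^ x * g₂ ^ y with htdef
  have hrel : g₁ ^ (a : ℤ) = g₂ ^ (b : ℤ) := by
    rw [zpow_natCast, zpow_natCast]; exact hpow
  have hc : Commute (g₁ ^ x) (g₂ ^ y) := hcomm.zpow_zpow x y
  have key₁ : g₂ ^ ((b : ℤ) * y) = g₁ ^ ((a : ℤ) * y) := by
    rw [zpow_mul, zpow_mul, hrel]
  have key₂ : g₁ ^ ((a : ℤ) * x) = g₂ ^ ((b : ℤ) * x) := by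
    rw [zpow_mul, zpow_mul, hrel]
  have hg₁ : t ^ (b : ℤ) = g₁ := by
    rw [htdef, hc.mul_zpow, ← zpow_mul, ← zpow_mul, mul_comm y (b : ℤ), key₁, ← zpow_add,
      show x * (b : ℤ) + (a : ℤ) * y = 1 by linear_combination -hbez, zpow_one]
  have hg₂ : t ^ (a : ℤ) = g₂ := by
    rw [htdef, hc.mul_zpow, ← zpow_mul, ← zpow_mul, mul_comm x (a : ℤ), key₂, ← zpow_add,
      show (b : ℤ) * x + y * (a : ℤ) = 1 by linear_combination -hbez, zpow_one]
  have heq : Subgroup.closure ({g₁, g₂} : Set (PGL2 F)) = Subgroup.zpowers t := by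
    apply le_antisymm
    · rw [Subgroup.closure_le]
      rintro s (rfl | rfl)
      · exact ⟨(b : ℤ), hg₁⟩
      · exact ⟨(a : ℤ), hg₂⟩
    · rintro s ⟨k, rfl⟩
      exact Subgroup.zpow_mem _
        (mul_mem (Subgroup.zpow_mem _ (Subgroup.subset_closure (by simp)) x)
          (Subgroup.zpow_mem _ (Subgroup.subset_closure (by simp)) y)) k
  rw [heq]
  exact zpowers_isCyclic t
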